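/- For every b : ω → ω with b(n) ≥ 1 for all n, letting I_n = [n(n+1)/2, n(n+1)/2 + n] (so ⟨I_n⟩ is the partition of ω into consecutive intervals with |I_n| = n+1) and c_b(n) = ∏_{i∈I_n} b(i), the relational system E_b is Tukey below Lc_0(c_b, id): explicitly, there are maps Ψ₋ : ∏b → ∏c_b, where Ψ₋(x)(n) codes the restriction x↾I_n, and Ψ₊ assigning to each pair (φ, w), where φ is a slalom with φ(n) ⊆ c_b(n) and |φ(n)| ≤ n for all n and w ⊆ ω is infinite, a ∏b-predictor Ψ₊(φ,w), such that for every x ∈ ∏b: if Ψ₋(x)(n) ∈ φ(n) for all but finitely many n ∈ w, then Ψ₊(φ,w) predicts x. -/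
import Mathlib

/-- The `n`-th interval `I_n = [n(n+1)/2, n(n+1)/2 + n]` of the partition of
`ω` into consecutive intervals with `|I_n| = n + 1`. -/
def Ivl (n : ℕ) : Set ℕ := Set.Icc (n * (n + 1) / 2) (n * (n + 1) / 2 + n)

/-- `c_b(n) = ∏_{i ∈ I_n} b i`, realized as the set (type) of functions
`I_n → ⋃ b` with values `x i < b i`; an element of it codes a restriction
`x ↾ I_n`. -/
def Cb (b : ℕ → ℕ) (n : ℕ) : Type := (i : Ivl n) → Fin (b i)

/-- `Ψ₋ : ∏b → ∏c_b`, `Ψ₋(x)(n)` codes the restriction `x ↾ I_n`. -/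
def ΨMinus (b : ℕ → ℕ) (x : ∀ n, Fin (b n)) : ∀ n, Cb b n := fun _ i => x i

/-- A `∏b`-predictor: an infinite `D ⊆ ω` together with maps
`π n : ∏_{k<n} b k → b n`. -/
structure Predictor (b : ℕ → ℕ) where
  D : Set ℕ
  infinite : D.Infinite
  pr : ∀ n : ℕ, ((k : Fin n) → Fin (b k)) → Fin (b n)

/-- `π` predicts `f` iff `f n = π n (f↾n)` for all but finitely many `n ∈ D`. -/
def Predictor.Predicts {b : ℕ → ℕ} (π : Predictor b) (f : ∀ n, Fin (b n)) :
    Prop :=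
  {n ∈ π.D | f n ≠ π.pr n fun k => f k}.Finite

/-! ### Auxiliary development -/

/-- The `n`-th triangular number, the left endpoint of `Ivl n`. -/
def tri (n : ℕ) : ℕ := n * (n + 1) / 2

lemma tri_succ (n : ℕ) : tri (n + 1) = tri n + n + 1 := by
  have h1 : (n+1) * (n+1+1) = n * (n+1) + 2*(n+1) := by ring
  have h2 : n * (n+1) % 2 = 0 := Nat.even_iff.mp (Nat.even_mul_succ_self n)
  simp only [tri]
  omega

lemma tri_mono {m n : ℕ} (h : m ≤ n) : tri m ≤ tri n := by
  induction n with
  | zero => have : m = 0 := by omega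
            subst this; exact le_rfl
  | succ k ih =>
    rcases Nat.lt_or_ge m (k+1) with h' | h'
    · have := ih (by omega); rw [tri_succ]; omega
    · have : m = k + 1 := by omega
      subst this; exact le_rfl

lemma mem_Ivl {m n : ℕ} : m ∈ Ivl n ↔ tri n ≤ m ∧ m ≤ tri n + n := by
  simp [Ivl, tri, Set.mem_Icc]

lemma Ivl_unique {m n n' : ℕ} (h : m ∈ Ivl n) (h' : m ∈ Ivl n') : n = n' := by
  rw [mem_Ivl] at h h'
  by_contra hne
  rcases Nat.lt_or_ge n n' with hlt | hge
  · have := tri_mono (Nat.succ_le_of_lt hlt); rw [tri_succ] at this; omega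
  · have hlt : n' < n := by omega
    have := tri_mono (Nat.succ_le_of_lt hlt); rw [tri_succ] at this; omega

lemma tri_mem_Ivl (n : ℕ) : tri n ∈ Ivl n := mem_Ivl.mpr ⟨le_rfl, by omega⟩

lemma exists_block (m : ℕ) : ∃ n, m ≤ tri n + n := ⟨m, by omega⟩

/-- The unique block to which `m` belongs. -/
noncomputable def blockOf (m : ℕ) : ℕ := Nat.find (exists_block m)

lemma blockOf_mem (m : ℕ) : m ∈ Ivl (blockOf m) := by
  rw [mem_Ivl]
  refine ⟨?_, Nat.find_spec (exists_block m)⟩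
  rcases Nat.eq_zero_or_pos (blockOf m) with h | h
  · rw [h]; simp [tri]
  · obtain ⟨k, hk⟩ : ∃ k, blockOf m = k + 1 := ⟨blockOf m - 1, by omega⟩
    have hkl : k < blockOf m := by omega
    have := Nat.find_min (exists_block m) hkl
    rw [hk, tri_succ]; omega

/-- `m` is a split-free level for the candidate set `S` in block `n`:
any two candidates agreeing below `m` agree at `m`. -/
def NoSplit {b : ℕ → ℕ} (n : ℕ) (S : Finset (Cb b n)) (m : ℕ) : Prop :=
  m ∈ Ivl n ∧ ∀ y ∈ S, ∀ z ∈ S,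
    (∀ i : Ivl n, (i : ℕ) < m → y i = z i) →
    ∀ hm : m ∈ Ivl n, y ⟨m, hm⟩ = z ⟨m, hm⟩

/-- Pigeonhole: since `|S| ≤ n` while `|I_n| = n + 1`, some level of the
block is split-free. -/
lemma exists_noSplit {b : ℕ → ℕ} (n : ℕ) (S : Finset (Cb b n))
    (hS : S.card ≤ n) : ∃ m, NoSplit n S m := by
  classical
  rcases S.eq_empty_or_nonempty with hE | hNE
  · exact ⟨tri n, tri_mem_Ivl n, by simp [hE]⟩
  by_contra hno
  push_neg at hno
  set r : ℕ → Cb b n → ((i : Ivl n) → Option (Fin (b i))) :=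
    fun j y i => if (i : ℕ) < j then some (y i) else none with hr
  have key : ∀ j, j ≤ n + 1 → j + 1 ≤ (S.image (r (tri n + j))).card := by
    intro j
    induction j with
    | zero =>
      intro _
      have : (S.image (r (tri n + 0))).Nonempty := hNE.image _
      simpa using Finset.card_pos.mpr this
    | succ j ih =>
      intro hj
      have ihj := ih (by omega)
      have hmem : tri n + j ∈ Ivl n := mem_Ivl.mpr ⟨by omega, by omega⟩
      have hsplit := hno (tri n + j)
      rw [NoSplit] at hsplit
      push_neg at hsplit
      obtain ⟨y, hy, z, hz, hagree, hm, hne⟩ := hsplit hmem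
      set tr : ((i : Ivl n) → Option (Fin (b i))) → ((i : Ivl n) → Option (Fin (b i))) :=
        fun f i => if (i : ℕ) < tri n + j then f i else none with htr
      have hfac : S.image (r (tri n + j)) = (S.image (r (tri n + (j + 1)))).image tr := by
        rw [Finset.image_image]
        apply Finset.image_congr
        intro u _
        funext i
        by_cases h : (i : ℕ) < tri n + j
        · simp [hr, htr, h, show (i : ℕ) < tri n + (j+1) by omega]
        · simp [hr, htr, h]
      have hymem : r (tri n + (j+1)) y ∈ S.image (r (tri n + (j+1))) :=
        Finset.mem_image_of_mem _ hy
      have hzmem : r (tri n + (j+1)) z ∈ S.image (r (tri n + (j+1))) :=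
        Finset.mem_image_of_mem _ hz
      have hyz : r (tri n + (j+1)) y ≠ r (tri n + (j+1)) z := by
        intro h
        apply hne
        have := congrFun h ⟨tri n + j, hm⟩
        simp only [hr, show tri n + j < tri n + (j+1) by omega, if_pos] at this
        exact Option.some.injEq _ _ ▸ (by simpa using this)
      have htreq : tr (r (tri n + (j+1)) y) = tr (r (tri n + (j+1)) z) := by
        funext i
        by_cases h : (i : ℕ) < tri n + j
        · simp only [htr, hr, if_pos h, if_pos (show (i : ℕ) < tri n + (j+1) by omega)]
          rw [hagree i h]
        · simp [htr, h]
      have hlt : (S.image (r (tri n + j))).card < (S.image (r (tri n + (j+1)))).card := by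
        rw [hfac]
        rcases lt_or_eq_of_le (Finset.card_image_le
          (s := S.image (r (tri n + (j+1)))) (f := tr)) with h | h
        · exact h
        · exact absurd (Finset.injOn_of_card_image_eq h hymem hzmem htreq) hyz
      omega
  have h1 := key (n + 1) le_rfl
  have h2 : (S.image (r (tri n + (n + 1)))).card ≤ S.card := Finset.card_image_le
  omega

open scoped Classical in
/-- A split-free level of block `n` for the slalom `φ` (defaulting to `tri n`). -/
noncomputable def level {b : ℕ → ℕ} (φ : ∀ n, Finset (Cb b n)) (n : ℕ) : ℕ :=
  if h : ∃ m, NoSplit n (φ n) m then h.choose else tri n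

lemma level_mem {b : ℕ → ℕ} (φ : ∀ n, Finset (Cb b n)) (n : ℕ) :
    level φ n ∈ Ivl n := by
  rw [level]
  split
  · next h => exact h.choose_spec.1
  · exact tri_mem_Ivl n

lemma level_noSplit {b : ℕ → ℕ} (φ : ∀ n, Finset (Cb b n)) (n : ℕ)
    (h : (φ n).card ≤ n) : NoSplit n (φ n) (level φ n) := by
  have hex := exists_noSplit n (φ n) h
  rw [level, dif_pos hex]
  exact hex.choose_spec

open scoped Classical in
/-- The prediction function: at `m`, predict using any member of `φ (blockOf m)`
consistent with the data below `m`. -/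
noncomputable def prFun (b : ℕ → ℕ) (hb : ∀ n, 1 ≤ b n)
    (φ : ∀ n, Finset (Cb b n)) (m : ℕ) (s : (k : Fin m) → Fin (b k)) :
    Fin (b m) :=
  if h : ((φ (blockOf m)).filter
      (fun y => ∀ i : Ivl (blockOf m), ∀ him : (i : ℕ) < m,
        y i = s ⟨(i : ℕ), him⟩)).Nonempty
  then h.choose ⟨m, blockOf_mem m⟩ else ⟨0, hb m⟩

lemma prFun_correct (b : ℕ → ℕ) (hb : ∀ n, 1 ≤ b n)
    (φ : ∀ n, Finset (Cb b n)) (x : ∀ n, Fin (b n)) (m : ℕ)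
    (hns : NoSplit (blockOf m) (φ (blockOf m)) m)
    (hx : ΨMinus b x (blockOf m) ∈ φ (blockOf m)) :
    prFun b hb φ m (fun k => x k) = x m := by
  classical
  have hxT : ΨMinus b x (blockOf m) ∈ (φ (blockOf m)).filter
      (fun y => ∀ i : Ivl (blockOf m), ∀ him : (i : ℕ) < m,
        y i = (fun k : Fin m => x k) ⟨(i : ℕ), him⟩) :=
    Finset.mem_filter.mpr ⟨hx, fun i him => rfl⟩
  have hT : ((φ (blockOf m)).filter
      (fun y => ∀ i : Ivl (blockOf m), ∀ him : (i : ℕ) < m,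
        y i = (fun k : Fin m => x k) ⟨(i : ℕ), him⟩)).Nonempty := ⟨_, hxT⟩
  rw [prFun, dif_pos hT]
  obtain ⟨hy, hcons⟩ := Finset.mem_filter.mp hT.choose_spec
  exact hns.2 _ hy _ hx (fun i hi => hcons i hi) (blockOf_mem m)

open scoped Classical in
/-- The predictor `Ψ₊(φ, w)`. -/
noncomputable def ΨP (b : ℕ → ℕ) (hb : ∀ n, 1 ≤ b n)
    (φ : ∀ n, Finset (Cb b n)) (w : Set ℕ) : Predictor b where
  D := level φ '' (if w.Infinite then w else Set.univ)
  infinite := by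
    have hinj : Function.Injective (level φ) := fun n n' h =>
      Ivl_unique (level_mem φ n) (h ▸ level_mem φ n')
    have hwi : (if w.Infinite then w else Set.univ).Infinite := by
      split
      · assumption
      · exact Set.infinite_univ
    exact hwi.image hinj.injOn
  pr := prFun b hb φ

/-- `E_b ≼_T Lc₀(c_b, id)`: there is a map `Ψ₊` assigning to each pair `(φ, w)`
(a slalom `φ` with `φ n ⊆ c_b n`, `|φ n| ≤ n`, and an infinite `w ⊆ ω`) a
`∏b`-predictor, such that for every `x ∈ ∏b`, if `Ψ₋(x)(n) ∈ φ n` for all but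
finitely many `n ∈ w`, then `Ψ₊(φ, w)` predicts `x`. -/
theorem stmt1 (b : ℕ → ℕ) (hb : ∀ n, 1 ≤ b n) :
    ∃ ΨPlus : (∀ n, Finset (Cb b n)) → Set ℕ → Predictor b,
      ∀ (φ : ∀ n, Finset (Cb b n)) (w : Set ℕ),
        (∀ n, (φ n).card ≤ n) → w.Infinite →
          ∀ x : ∀ n, Fin (b n),
            {n ∈ w | ΨMinus b x n ∉ φ n}.Finite → (ΨPlus φ w).Predicts x := by
  classical
  refine ⟨ΨP b hb, ?_⟩
  intro φ w hcard hw x hfin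
  rw [Predictor.Predicts]
  apply Set.Finite.subset (hfin.image (level φ))
  intro m hm
  obtain ⟨hmD, hfail⟩ := hm
  simp only [ΨP, if_pos hw] at hmD
  obtain ⟨n, hnw, hmeq⟩ := hmD
  refine ⟨n, ⟨hnw, ?_⟩, hmeq⟩
  intro hx
  apply hfail
  have hblock : blockOf m = n :=
    Ivl_unique (blockOf_mem m) (hmeq ▸ level_mem φ n)
  have hns : NoSplit (blockOf m) (φ (blockOf m)) m := by
    rw [hblock, ← hmeq]
    exact hmeq ▸ level_noSplit φ n (hcard n)
  have hx' : ΨMinus b x (blockOf m) ∈ φ (blockOf m) := by rw [hblock]; exact hx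
  exact (prFun_correct b hb φ x m hns hx').symm
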